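/- Let h, w, k : ℤ⁺ → ℤ⁺ with k ≻ 1. If h ≍ k, then L^k[h, w] ≍ h·w; that is, there exist constants 0 < a ≤ b with a·h(n)·w(n) ≤ L^{k(n)}[h(n), w(n)] ≤ b·h(n)·w(n) for all large n. -/

import Mathlib

open Filter

/-- A Kostant picture of height `η`. -/
def IsKostant {w : ℕ} (η : Fin w → ℕ) (c : Fin w → Fin w → ℕ) : Prop :=
  (∀ i j : Fin w, j < i → c i j = 0) ∧
  ∀ m : Fin w, (∑ i : Fin w, ∑ j : Fin w, (if i ≤ m ∧ m ≤ j then c i j else 0)) = η m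

/-- Kostant's partition function. -/
noncomputable def KPF {w : ℕ} (η : Fin w → ℕ) : ℕ :=
  Set.ncard {c : Fin w → Fin w → ℕ | IsKostant η c}

/-- `L[h,w] = ln KPF[(h,…,h)]` for the constant tuple of length `w`. -/
noncomputable def Lbox (h w : ℕ) : ℝ := Real.log (KPF (fun _ : Fin w => h))

/-- `T^k[η]`: the maximal number of `k`-colorings of a Kostant picture of height `η`,
where a picture `c` has `∏_{i ≤ j} C(c i j + k - 1, k - 1)` colorings. -/
noncomputable def Tcol {w : ℕ} (k : ℕ) (η : Fin w → ℕ) : ℕ :=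
  sSup ((fun c : Fin w → Fin w → ℕ =>
      ∏ i : Fin w, ∏ j : Fin w,
        (if i ≤ j then Nat.choose (c i j + k - 1) (k - 1) else 1)) ''
    {c : Fin w → Fin w → ℕ | IsKostant η c})

/-- `L^k[h,w] = ln T^k[(h,…,h)]` for the constant tuple of length `w`. -/
noncomputable def Lcol (k h w : ℕ) : ℝ := Real.log (Tcol k (fun _ : Fin w => h))

open Finset Real

set_option maxHeartbeats 1600000

lemma pow_le_factorial_mul_exp : ∀ c : ℕ, (c:ℝ)^c ≤ c.factorial * Real.exp c := by
  intro c
  induction c with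
  | zero => simp
  | succ n ih =>
    have hstep : ((n:ℝ)+1)^n ≤ (n:ℝ)^n * Real.exp 1 := by
      rcases Nat.eq_zero_or_pos n with h|h
      · subst h; simp [Real.one_le_exp_iff.2 zero_le_one]
      · have hn : (0:ℝ) < n := by exact_mod_cast h
        have h1 : (n:ℝ) + 1 ≤ n * Real.exp (1/n) := by
          have := Real.add_one_le_exp (1/(n:ℝ))
          have e : (n:ℝ) + 1 = n * (1/n + 1) := by field_simp; ring
          rw [e]
          nlinarith
        calc ((n:ℝ)+1)^n ≤ (n * Real.exp (1/n))^n := by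
              apply pow_le_pow_left₀ (by positivity) h1
        _ = (n:ℝ)^n * Real.exp (1/n) ^ n := mul_pow _ _ _
        _ = (n:ℝ)^n * Real.exp 1 := by
              rw [← Real.exp_nat_mul]
              congr 1
              field_simp
    have hfact : (0:ℝ) ≤ (n.factorial : ℝ) := by positivity
    have hpow : (0:ℝ) ≤ ((n:ℝ)+1)^n := by positivity
    calc ((n+1:ℕ):ℝ)^(n+1) = ((n:ℝ)+1) * ((n:ℝ)+1)^n := by push_cast; ring
    _ ≤ ((n:ℝ)+1) * ((n:ℝ)^n * Real.exp 1) := by nlinarith [hstep]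
    _ ≤ ((n:ℝ)+1) * ((n.factorial * Real.exp n) * Real.exp 1) := by
          have he : (0:ℝ) < Real.exp 1 := Real.exp_pos 1
          have hh : (n:ℝ)^n * Real.exp 1 ≤ (n.factorial * Real.exp n) * Real.exp 1 := by
            nlinarith [ih]
          nlinarith
    _ = ((n+1:ℕ).factorial : ℝ) * Real.exp ((n+1:ℕ):ℝ) := by
          rw [Nat.factorial_succ]
          push_cast
          rw [Real.exp_add]
          ring


lemma log_choose_le (c k : ℕ) (hk : 1 ≤ k) :
    Real.log ((c + k - 1).choose (k-1)) ≤ c + c * Real.log (((c:ℝ) + k)/c) := by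
  rcases Nat.eq_zero_or_pos c with rfl|hc
  · simp
  · have hcR : (0:ℝ) < c := by exact_mod_cast hc
    have hsymm : (c + k - 1).choose (k-1) = (c + k - 1).choose c := by
      have h1 : (k-1) ≤ c + k - 1 := by omega
      have := Nat.choose_symm h1
      rw [← this]
      congr 1
      omega
    have h2 : ((c + k - 1).choose (k-1) : ℝ) ≤ ((c:ℝ) + k)^c / c.factorial := by
      rw [hsymm]
      refine le_trans (Nat.choose_le_pow_div c (c+k-1)) ?_
      gcongr
      have h5 : c + k - 1 ≤ c + k := by omega
      exact_mod_cast Nat.cast_le.mpr h5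
    have hCpos : (0:ℝ) < ((c + k - 1).choose (k-1) : ℝ) := by
      exact_mod_cast Nat.choose_pos (show k - 1 ≤ c + k - 1 by omega)
    have h3 : ((c:ℝ) + k)^c / c.factorial ≤ ((c:ℝ)+k)^c * Real.exp c / (c:ℝ)^c := by
      rw [div_le_div_iff₀ (by positivity) (by positivity)]
      have h4 := pow_le_factorial_mul_exp c
      nlinarith [pow_pos (show (0:ℝ) < (c:ℝ)+k by positivity) c, Real.exp_pos (c:ℝ)]
    calc Real.log ((c + k - 1).choose (k-1)) ≤ Real.log (((c:ℝ)+k)^c * Real.exp c / (c:ℝ)^c) :=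
          Real.log_le_log hCpos (h2.trans h3)
    _ = c * Real.log ((c:ℝ)+k) + c - c * Real.log c := by
        rw [Real.log_div (by positivity) (by positivity),
          Real.log_mul (by positivity) (by positivity), Real.log_pow, Real.log_pow, Real.log_exp]
        try push_cast
        try ring
    _ = c + c * Real.log (((c:ℝ)+k)/c) := by
        rw [Real.log_div (by positivity) (by positivity)]
        ring

lemma two_pow_min_le_choose : ∀ a b : ℕ, 2 ^ (min a b) ≤ (a + b).choose b := by
  intro a
  induction a with
  | zero =>
    intro b
    have := Nat.choose_pos (le_refl b)
    simpa using this
  | succ n ih =>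
    intro b
    cases b with
    | zero => simp
    | succ m =>
      have h1 : (n + 1 + (m + 1)).choose (m+1) = (n + (m+1)).choose (m+1) + (n + (m+1)).choose m := by
        rw [show n + 1 + (m+1) = (n + (m+1)) + 1 by omega, Nat.choose_succ_succ']
        omega
      have h2 : (n + (m+1)).choose (m+1) ≥ (n + m).choose m := by
        rw [show n + (m+1) = (n + m) + 1 by omega, Nat.choose_succ_succ']
        omega
      have h3 : (n + (m+1)).choose m ≥ (n + m).choose m := Nat.choose_le_choose m (by omega)
      have h4 := ih m
      have h5 : min (n+1) (m+1) = min n m + 1 := by omega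
      rw [h5, pow_succ, h1]
      omega


lemma logsum {ι : Type*} (s : Finset ι) (c : ι → ℝ) (hc : ∀ i ∈ s, 1 ≤ c i) (k : ℝ) (hk : 0 ≤ k) :
    ∑ i ∈ s, c i * Real.log ((c i + k)/(c i)) ≤
      (∑ i ∈ s, c i) * Real.log (((∑ i ∈ s, c i) + s.card * k)/(∑ i ∈ s, c i)) := by
  rcases s.eq_empty_or_nonempty with rfl|hne
  · simp
  · set S := ∑ i ∈ s, c i with hS
    obtain ⟨i0, hi0⟩ := hne
    have hS1 : 1 ≤ S := by
      have h1 : c i0 ≤ S := Finset.single_le_sum (fun i hi => le_trans zero_le_one (hc i hi)) hi0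
      linarith [hc i0 hi0]
    have hSpos : 0 < S := by linarith
    have key := (strictConcaveOn_log_Ioi.concaveOn).le_map_sum (t := s)
      (w := fun i => c i / S) (p := fun i => (c i + k)/(c i))
      (fun i hi => div_nonneg (le_trans zero_le_one (hc i hi)) hSpos.le)
      (by rw [← Finset.sum_div]; field_simp; exact hS.symm)
      (fun i hi => by
        have h1 := hc i hi
        have : (0:ℝ) < (c i + k)/(c i) := by positivity
        simpa using this)
    simp only [smul_eq_mul] at key
    have e1 : ∑ i ∈ s, (c i / S) * ((c i + k)/(c i)) = (S + s.card * k)/S := by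
      have h6 : ∀ i ∈ s, (c i / S) * ((c i + k)/(c i)) = (c i + k)/S := by
        intro i hi
        have h1 : c i ≠ 0 := by have := hc i hi; linarith
        field_simp
      rw [Finset.sum_congr rfl h6, ← Finset.sum_div, Finset.sum_add_distrib,
        Finset.sum_const, nsmul_eq_mul]
    have e2 : ∑ i ∈ s, (c i / S) * Real.log ((c i + k)/(c i))
        = (∑ i ∈ s, c i * Real.log ((c i + k)/(c i))) / S := by
      rw [Finset.sum_div]
      refine Finset.sum_congr rfl (fun i hi => ?_)
      ring
    rw [e1, e2] at key
    calc ∑ i ∈ s, c i * Real.log ((c i + k)/(c i))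
        = S * ((∑ i ∈ s, c i * Real.log ((c i + k)/(c i))) / S) := by field_simp
    _ ≤ S * Real.log ((S + s.card * k)/S) := by
        apply mul_le_mul_of_nonneg_left key (le_of_lt hSpos)

lemma slog_bound (s k : ℝ) (hs : 1 ≤ s) (hk : 1 ≤ k) :
    s * Real.log ((s+k)/s) ≤ s + 2*Real.sqrt (s*k) := by
  have hs0 : 0 < s := by linarith
  have hk0 : 0 < k := by linarith
  rcases le_or_gt k s with h|h
  · have h1 : Real.log ((s+k)/s) ≤ k/s := by
      have := Real.log_le_sub_one_of_pos (show (0:ℝ) < (s+k)/s by positivity)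
      have e : (s+k)/s - 1 = k/s := by field_simp; ring
      linarith [e ▸ this]
    have h2 : s * Real.log ((s+k)/s) ≤ k := by
      have := mul_le_mul_of_nonneg_left h1 hs0.le
      calc s * Real.log ((s+k)/s) ≤ s * (k/s) := this
      _ = k := by field_simp
    have h3 : k ≤ Real.sqrt (s*k) := by
      have h4 : Real.sqrt (k*k) ≤ Real.sqrt (s*k) := Real.sqrt_le_sqrt (by nlinarith)
      rwa [Real.sqrt_mul_self hk0.le] at h4
    nlinarith [Real.sqrt_nonneg (s*k)]
  · have h1 : Real.log ((s+k)/s) ≤ Real.log 2 + 2 * Real.log (Real.sqrt (k/s)) := by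
      have e0 : (0:ℝ) < (s+k)/s := by positivity
      have e1 : Real.log ((s+k)/s) ≤ Real.log (2*(k/s)) := by
        apply Real.log_le_log e0
        rw [div_le_iff₀ hs0] at *
        have : 2*(k/s)*s = 2*k := by field_simp
        nlinarith [h]
      have e2 : Real.log (2*(k/s)) = Real.log 2 + Real.log (k/s) := by
        rw [Real.log_mul (by norm_num) (by positivity)]
      have e3 : Real.log (k/s) = 2 * Real.log (Real.sqrt (k/s)) := by
        rw [Real.log_sqrt (by positivity)]
        ring
      linarith [e1, e2 ▸ e1]
    have h2 : Real.log (Real.sqrt (k/s)) ≤ Real.sqrt (k/s) := by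
      have := Real.log_le_sub_one_of_pos (show (0:ℝ) < Real.sqrt (k/s) by positivity)
      linarith
    have h3 : s * Real.sqrt (k/s) = Real.sqrt (s*k) := by
      rw [show s * k = s^2 * (k/s) by field_simp, Real.sqrt_mul (by positivity),
        Real.sqrt_sq hs0.le]
    have hlog2 : Real.log 2 ≤ 1 := by
      have := Real.log_le_sub_one_of_pos (show (0:ℝ) < 2 by norm_num)
      linarith
    calc s * Real.log ((s+k)/s) ≤ s * (Real.log 2 + 2 * Real.sqrt (k/s)) := by
          apply mul_le_mul_of_nonneg_left _ hs0.le
          nlinarith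
    _ = s * Real.log 2 + 2 * (s * Real.sqrt (k/s)) := by ring
    _ ≤ s + 2 * Real.sqrt (s*k) := by
          rw [h3]
          nlinarith

lemma sum_inv_sq_le (n : ℕ) : ∑ ℓ ∈ Finset.Icc 1 n, (1:ℝ)/(ℓ:ℝ)^2 ≤ 2 := by
  have key : ∀ m : ℕ, 1 ≤ m → ∑ ℓ ∈ Finset.Icc 1 m, (1:ℝ)/(ℓ:ℝ)^2 ≤ 2 - 1/m := by
    intro m hm
    induction m with
    | zero => omega
    | succ p ih =>
      rcases Nat.eq_zero_or_pos p with rfl|hp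
      · norm_num
      · rw [Finset.sum_Icc_succ_top (by omega : 1 ≤ p + 1)]
        have h1 := ih hp
        have hpR : (0:ℝ) < p := by exact_mod_cast hp
        have h2 : (1:ℝ)/((p:ℝ)+1)^2 + (2 - 1/p) ≤ 2 - 1/((p:ℝ)+1) := by
          have e : (1:ℝ)/p - 1/((p:ℝ)+1) = 1/(p*(p+1)) := by
            field_simp
            try ring
          have h7 : (1:ℝ)/((p:ℝ)+1)^2 ≤ 1/(p*(p+1)) := by
            rw [div_le_div_iff₀ (by positivity) (by positivity)]
            nlinarith
          linarith [e ▸ h7]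
        push_cast
        push_cast at h1
        linarith
  rcases Nat.eq_zero_or_pos n with rfl|hn
  · simp
  · have := key n hn
    have : (0:ℝ) < n := by exact_mod_cast hn
    have h2 := key n hn
    have : (0:ℝ) ≤ 1/(n:ℝ) := by positivity
    linarith


def Fcol {w : ℕ} (k : ℕ) (c : Fin w → Fin w → ℕ) : ℕ :=
  ∏ i : Fin w, ∏ j : Fin w, (if i ≤ j then Nat.choose (c i j + k - 1) (k - 1) else 1)

lemma Tcol_eq_sSup_Fcol {w : ℕ} (k : ℕ) (η : Fin w → ℕ) :
    Tcol k η = sSup (Fcol k '' {c | IsKostant η c}) := rfl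

lemma kostant_entry_le {w : ℕ} {h : ℕ} {c : Fin w → Fin w → ℕ}
    (hc : IsKostant (fun _ => h) c) (i j : Fin w) : c i j ≤ h := by
  rcases le_or_gt i j with hij | hij
  · have h2 := hc.2 i
    calc c i j = (if i ≤ i ∧ i ≤ j then c i j else 0) := by simp [hij]
    _ ≤ ∑ j' : Fin w, (if i ≤ i ∧ i ≤ j' then c i j' else 0) :=
        Finset.single_le_sum (f := fun j' => if i ≤ i ∧ i ≤ j' then c i j' else 0)
          (fun _ _ => Nat.zero_le _) (Finset.mem_univ j)
    _ ≤ ∑ i' : Fin w, ∑ j' : Fin w, (if i' ≤ i ∧ i ≤ j' then c i' j' else 0) :=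
        Finset.single_le_sum (f := fun i' => ∑ j' : Fin w, (if i' ≤ i ∧ i ≤ j' then c i' j' else 0))
          (fun _ _ => Nat.zero_le _) (Finset.mem_univ i)
    _ = h := h2
  · rw [hc.1 i j hij]
    exact Nat.zero_le _

lemma kostant_finite {w : ℕ} (h : ℕ) : {c : Fin w → Fin w → ℕ | IsKostant (fun _ => h) c}.Finite := by
  apply Set.Finite.subset (Set.finite_Icc (fun _ _ => 0) (fun (_ _ : Fin w) => h))
  intro c hc
  simp only [Set.mem_Icc, Pi.le_def]
  exact ⟨fun i j => Nat.zero_le _, fun i j => kostant_entry_le hc i j⟩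

lemma isKostant_diag {w : ℕ} (h : ℕ) :
    IsKostant (fun _ : Fin w => h) (fun i j => if i = j then h else 0) := by
  constructor
  · intro i j hij
    show (if i = j then h else 0) = 0
    rw [if_neg]
    intro e
    exact absurd hij (by simp [e])
  · intro m
    have e : ∀ i j : Fin w, (if i ≤ m ∧ m ≤ j then (if i = j then h else 0) else 0)
        = if i = m ∧ j = m then h else 0 := by
      intro i j
      rcases eq_or_ne i j with rfl|hne
      · by_cases h1 : i ≤ m ∧ m ≤ i
        · have : i = m := le_antisymm h1.1 h1.2
          subst this
          simp
        · rw [if_neg h1, if_neg]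
          simp only [not_and] at h1 ⊢
          intro e1 e2
          exact h1 (le_of_eq e1) (le_of_eq e2.symm) |>.elim
      · rw [if_neg (fun (e : i = m ∧ j = m) => hne (by rw [e.1, e.2]))]
        simp [hne]
    calc (∑ i : Fin w, ∑ j : Fin w, (if i ≤ m ∧ m ≤ j then (if i = j then h else 0) else 0))
        = ∑ i : Fin w, ∑ j : Fin w, (if i = m ∧ j = m then h else 0) := by
          exact Finset.sum_congr rfl fun i _ => Finset.sum_congr rfl fun j _ => e i j
    _ = h := by
          have e2 : ∀ i : Fin w, ∑ j : Fin w, (if i = m ∧ j = m then h else 0)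
              = if i = m then h else 0 := by
            intro i
            rcases eq_or_ne i m with rfl|hne
            · simp [Finset.sum_ite_eq']
            · simp [hne]
          rw [Finset.sum_congr rfl fun i _ => e2 i]
          simp

lemma exists_max_kostant {w : ℕ} (k h : ℕ) :
    ∃ c : Fin w → Fin w → ℕ, IsKostant (fun _ => h) c ∧
      Tcol k (fun _ : Fin w => h) = Fcol k c := by
  have hne : (Fcol (w := w) k '' {c | IsKostant (fun _ => h) c}).Nonempty :=
    ⟨_, ⟨_, isKostant_diag h, rfl⟩⟩
  have hfin : (Fcol (w := w) k '' {c | IsKostant (fun _ => h) c}).Finite :=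
    (kostant_finite h).image _
  obtain ⟨c, hc, hx⟩ := Set.Nonempty.csSup_mem hne hfin
  exact ⟨c, hc, hx.symm⟩

lemma Fcol_le_Tcol {w : ℕ} (k h : ℕ) {c : Fin w → Fin w → ℕ} (hc : IsKostant (fun _ => h) c) :
    Fcol k c ≤ Tcol k (fun _ : Fin w => h) :=
  le_csSup ((kostant_finite h).image _).bddAbove ⟨c, hc, rfl⟩

lemma two_pow_le_Tcol {w : ℕ} (k h : ℕ) (hk : 1 ≤ k) :
    2 ^ (min h (k-1) * w) ≤ Tcol k (fun _ : Fin w => h) := by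
  refine le_trans ?_ (Fcol_le_Tcol k h (isKostant_diag h))
  have e1 : Fcol k (fun i j : Fin w => if i = j then h else 0)
      = ((h + (k-1)).choose (k-1)) ^ w := by
    unfold Fcol
    have e2 : ∀ i j : Fin w, (if i ≤ j then ((if i = j then h else 0) + k - 1).choose (k-1) else 1)
        = if i = j then (h + (k-1)).choose (k-1) else 1 := by
      intro i j
      rcases eq_or_ne i j with rfl|hne
      · rw [if_pos le_rfl, if_pos rfl, if_pos rfl]
        congr 1
        omega
      · rw [if_neg hne]
        split_ifs with h1
        · rw [show 0 + k - 1 = k - 1 by omega, Nat.choose_self]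
        · rfl
    rw [Finset.prod_congr rfl fun i _ => Finset.prod_congr rfl fun j _ => e2 i j]
    have e3 : ∀ i : Fin w, (∏ j : Fin w, if i = j then (h + (k-1)).choose (k-1) else 1)
        = (h + (k-1)).choose (k-1) := by
      intro i
      simp [Finset.prod_ite_eq]
    rw [Finset.prod_congr rfl fun i _ => e3 i, Finset.prod_const, Finset.card_univ,
      Fintype.card_fin]
  rw [e1, pow_mul]
  exact Nat.pow_le_pow_left (two_pow_min_le_choose h (k-1)) w



lemma perpoint {w : ℕ} (k h : ℕ) (hk : 1 ≤ k) (γ : ℝ) (hγ : 0 < γ) (hγk : γ * k ≤ h)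
    (c : Fin w → Fin w → ℕ) (m : Fin w)
    (hm : ∑ i : Fin w, ∑ j : Fin w, (if i ≤ m ∧ m ≤ j then c i j else 0) = h) :
    ∑ i : Fin w, ∑ j : Fin w, (if i ≤ m ∧ m ≤ j then
        (c i j : ℝ) * Real.log (((c i j : ℝ) + k)/(c i j)) / ((j.1 - i.1 + 1 : ℕ) : ℝ) else 0)
      ≤ (2 + 3/Real.sqrt γ) * h := by
  classical
  have hh0 : (0:ℝ) ≤ h := Nat.cast_nonneg h
  set spanN : Fin w × Fin w → ℕ := fun p => p.2.1 - p.1.1 + 1 with hspanN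
  set F : Fin w × Fin w → ℝ := fun p =>
    (c p.1 p.2 : ℝ) * Real.log (((c p.1 p.2 : ℝ) + k)/(c p.1 p.2)) / (spanN p : ℝ) with hF
  set u0 : Finset (Fin w × Fin w) :=
    Finset.univ.filter (fun p => p.1 ≤ m ∧ m ≤ p.2) with hu0
  set u : Finset (Fin w × Fin w) := u0.filter (fun p => 1 ≤ c p.1 p.2) with hu
  -- convert LHS to a sum over u
  have conv0 : ∑ p ∈ u0, F p = ∑ i : Fin w, ∑ j : Fin w, (if i ≤ m ∧ m ≤ j then
        (c i j : ℝ) * Real.log (((c i j : ℝ) + k)/(c i j)) / ((j.1 - i.1 + 1 : ℕ) : ℝ) else 0) := by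
    rw [hu0, Finset.sum_filter, Fintype.sum_prod_type]
  have conv1 : ∑ i : Fin w, ∑ j : Fin w, (if i ≤ m ∧ m ≤ j then
        (c i j : ℝ) * Real.log (((c i j : ℝ) + k)/(c i j)) / ((j.1 - i.1 + 1 : ℕ) : ℝ) else 0)
      = ∑ p ∈ u, F p := by
    rw [← conv0]
    refine (Finset.sum_subset (Finset.filter_subset _ _) ?_).symm
    intro p hp hnp
    have hc0 : c p.1 p.2 = 0 := by
      by_contra hne
      exact hnp (Finset.mem_filter.mpr ⟨hp, by omega⟩)
    simp [hF, hc0]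
  rw [conv1]
  -- the mass constraint
  have hmass : ∑ p ∈ u, (c p.1 p.2 : ℝ) ≤ h := by
    have e1 : ∑ p ∈ u0, (c p.1 p.2 : ℕ) = h := by
      rw [← hm, hu0, Finset.sum_filter, Fintype.sum_prod_type]
    have e2 : ∑ p ∈ u, (c p.1 p.2 : ℕ) ≤ h := by
      rw [← e1]
      exact Finset.sum_le_sum_of_subset (Finset.filter_subset _ _)
    calc ∑ p ∈ u, (c p.1 p.2 : ℝ) = ((∑ p ∈ u, c p.1 p.2 : ℕ) : ℝ) := by push_cast; rfl
    _ ≤ h := by exact_mod_cast e2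
  have humem : ∀ p ∈ u, (p.1 ≤ m ∧ m ≤ p.2) ∧ 1 ≤ c p.1 p.2 := by
    intro p hp
    simp only [hu, hu0, Finset.mem_filter, Finset.mem_univ, true_and] at hp
    exact ⟨hp.1, hp.2⟩
  have hmaps : ∀ p ∈ u, spanN p ∈ Finset.Icc 1 w := by
    intro p hp
    have h2 := p.2.isLt
    simp only [Finset.mem_Icc, hspanN]
    omega
  rw [← Finset.sum_fiberwise_of_maps_to hmaps F]
  set sl : ℕ → ℝ := fun ℓ => ∑ p ∈ u.filter (fun p => spanN p = ℓ), (c p.1 p.2 : ℝ) with hsl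
  have hs_nonneg : ∀ ℓ, 0 ≤ sl ℓ :=
    fun ℓ => Finset.sum_nonneg fun p _ => Nat.cast_nonneg _
  have hkR : (1:ℝ) ≤ (k:ℝ) := by exact_mod_cast hk
  have hk0 : (0:ℝ) ≤ (k:ℝ) := by linarith
  -- per-fiber bound
  have hfiber : ∀ ℓ ∈ Finset.Icc 1 w, ∑ p ∈ u.filter (fun p => spanN p = ℓ), F p
      ≤ 2 * sl ℓ + 2 * (Real.sqrt (sl ℓ * k) / ℓ) := by
    intro ℓ hℓ
    have hℓ1 : 1 ≤ ℓ := (Finset.mem_Icc.mp hℓ).1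
    have hℓR : (1:ℝ) ≤ (ℓ:ℝ) := by exact_mod_cast hℓ1
    have hℓpos : (0:ℝ) < ℓ := by linarith
    set Q := u.filter (fun p => spanN p = ℓ) with hQ
    have hsv : sl ℓ = ∑ p ∈ Q, (c p.1 p.2 : ℝ) := rfl
    rcases Q.eq_empty_or_nonempty with he|hne
    · rw [he, hsv, he]
      simp
    · have hQmem : ∀ p ∈ Q, ((p.1 ≤ m ∧ m ≤ p.2) ∧ 1 ≤ c p.1 p.2) ∧ spanN p = ℓ := by
        intro p hp
        rw [hQ, Finset.mem_filter] at hp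
        exact ⟨humem p hp.1, hp.2⟩
      have hc1 : ∀ p ∈ Q, (1:ℝ) ≤ (c p.1 p.2 : ℝ) := by
        intro p hp
        exact_mod_cast (hQmem p hp).1.2
      have hs1 : 1 ≤ sl ℓ := by
        obtain ⟨p0, hp0⟩ := hne
        rw [hsv]
        calc (1:ℝ) ≤ (c p0.1 p0.2 : ℝ) := hc1 p0 hp0
        _ ≤ ∑ p ∈ Q, (c p.1 p.2 : ℝ) := Finset.single_le_sum (f := fun p => (c p.1 p.2 : ℝ))
            (fun p _ => Nat.cast_nonneg _) hp0
      have hspos : 0 < sl ℓ := by linarith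
      -- card bound
      have hcard : Q.card ≤ ℓ := by
        have hinj : Q.card ≤ (Finset.range ℓ).card := by
          apply Finset.card_le_card_of_injOn (fun p => m.1 - p.1.1)
          · intro p hp
            obtain ⟨⟨⟨hp1, hp2⟩, _⟩, hsp⟩ := hQmem p hp
            have e1 : p.1.1 ≤ m.1 := hp1
            have e2 : m.1 ≤ p.2.1 := hp2
            simp only [hspanN] at hsp
            simp only [Finset.mem_coe, Finset.mem_range]
            omega
          · intro p hp q hq heq
            obtain ⟨⟨⟨hp1, hp2⟩, _⟩, hsp⟩ := hQmem p hp
            obtain ⟨⟨⟨hq1, hq2⟩, _⟩, hsq⟩ := hQmem q hq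
            have e1 : p.1.1 ≤ m.1 := hp1
            have e2 : m.1 ≤ p.2.1 := hp2
            have e3 : q.1.1 ≤ m.1 := hq1
            have e4 : m.1 ≤ q.2.1 := hq2
            simp only [hspanN] at hsp hsq
            simp only at heq
            have f1 : p.1.1 = q.1.1 := by omega
            have f2 : p.2.1 = q.2.1 := by omega
            exact Prod.ext (Fin.ext f1) (Fin.ext f2)
        simpa using hinj
      have hcardR : ((Q.card : ℕ) : ℝ) ≤ (ℓ : ℝ) := by exact_mod_cast hcard
      -- rewrite F on the fiber
      have hFQ : ∑ p ∈ Q, F p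
          = (∑ p ∈ Q, (c p.1 p.2 : ℝ) * Real.log (((c p.1 p.2 : ℝ) + k)/(c p.1 p.2))) / ℓ := by
        rw [Finset.sum_div]
        refine Finset.sum_congr rfl (fun p hp => ?_)
        simp only [hF]
        rw [(hQmem p hp).2]
      -- the log-sum inequality
      have hls := logsum Q (fun p => (c p.1 p.2 : ℝ)) hc1 (k:ℝ) hk0
      rw [← hsv] at hls
      have hmono : (sl ℓ) * Real.log ((sl ℓ + Q.card * k)/(sl ℓ))
          ≤ (sl ℓ) * Real.log ((sl ℓ + ℓ * k)/(sl ℓ)) := by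
        apply mul_le_mul_of_nonneg_left _ hspos.le
        apply Real.log_le_log (by positivity)
        gcongr
      -- split the log
      have hsplit : (sl ℓ) * Real.log ((sl ℓ + ℓ * k)/(sl ℓ))
          ≤ sl ℓ * ℓ + (sl ℓ + 2*Real.sqrt (sl ℓ * k)) := by
        have hA : (sl ℓ + ℓ*k)/(sl ℓ) ≤ (1+(ℓ:ℝ)) * ((sl ℓ + k)/(sl ℓ)) := by
          rw [← mul_div_assoc]
          gcongr
          nlinarith
        have hB : Real.log ((sl ℓ + ℓ*k)/(sl ℓ))
            ≤ Real.log (1+(ℓ:ℝ)) + Real.log ((sl ℓ + k)/(sl ℓ)) := by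
          calc Real.log ((sl ℓ + ℓ*k)/(sl ℓ)) ≤ Real.log ((1+(ℓ:ℝ)) * ((sl ℓ + k)/(sl ℓ))) :=
                Real.log_le_log (by positivity) hA
          _ = Real.log (1+(ℓ:ℝ)) + Real.log ((sl ℓ + k)/(sl ℓ)) := by
                rw [Real.log_mul (by positivity) (by positivity)]
        have hC : Real.log (1+(ℓ:ℝ)) ≤ (ℓ:ℝ) := by
          have := Real.log_le_sub_one_of_pos (show (0:ℝ) < 1+(ℓ:ℝ) by positivity)
          linarith
        have hD := slog_bound (sl ℓ) (k:ℝ) hs1 hkR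
        calc (sl ℓ) * Real.log ((sl ℓ + ℓ * k)/(sl ℓ))
            ≤ (sl ℓ) * (Real.log (1+(ℓ:ℝ)) + Real.log ((sl ℓ + k)/(sl ℓ))) :=
              mul_le_mul_of_nonneg_left hB hspos.le
        _ = (sl ℓ) * Real.log (1+(ℓ:ℝ)) + (sl ℓ) * Real.log ((sl ℓ + k)/(sl ℓ)) := by ring
        _ ≤ sl ℓ * ℓ + (sl ℓ + 2*Real.sqrt (sl ℓ * k)) := by
              have := mul_le_mul_of_nonneg_left hC hspos.le
              linarith
      -- assemble the fiber bound
      rw [hFQ]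
      have step1 : (∑ p ∈ Q, (c p.1 p.2 : ℝ) * Real.log (((c p.1 p.2 : ℝ) + k)/(c p.1 p.2))) / ℓ
          ≤ (sl ℓ * ℓ + (sl ℓ + 2*Real.sqrt (sl ℓ * k))) / ℓ := by
        gcongr
        exact hls.trans (hmono.trans hsplit)
      refine step1.trans ?_
      rw [add_div]
      have e1 : sl ℓ * ℓ / ℓ = sl ℓ := by field_simp
      have e2 : (sl ℓ + 2*Real.sqrt (sl ℓ * k)) / ℓ ≤ sl ℓ + 2 * (Real.sqrt (sl ℓ * k) / ℓ) := by
        rw [add_div, mul_div_assoc]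
        have : sl ℓ / ℓ ≤ sl ℓ := by
          apply div_le_self hspos.le hℓR
        linarith
      rw [e1]
      linarith
  -- sum of fibers
  have hsum_s : ∑ ℓ ∈ Finset.Icc 1 w, sl ℓ ≤ h := by
    rw [hsl]
    rw [Finset.sum_fiberwise_of_maps_to hmaps (fun p => (c p.1 p.2 : ℝ))]
    exact hmass
  -- Cauchy-Schwarz
  have hsum_nonneg : 0 ≤ ∑ ℓ ∈ Finset.Icc 1 w, sl ℓ :=
    Finset.sum_nonneg fun ℓ _ => hs_nonneg ℓ
  have hCS : ∑ ℓ ∈ Finset.Icc 1 w, Real.sqrt (sl ℓ * k) / ℓ ≤ 3/2 * h / Real.sqrt γ := by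
    set X := ∑ ℓ ∈ Finset.Icc 1 w, Real.sqrt (sl ℓ * k) / ℓ with hX
    have hXnn : 0 ≤ X := Finset.sum_nonneg fun ℓ _ => by positivity
    have h1 : X^2 ≤ (∑ ℓ ∈ Finset.Icc 1 w, sl ℓ * k) * (∑ ℓ ∈ Finset.Icc 1 w, 1/(ℓ:ℝ)^2) := by
      apply Finset.sum_sq_le_sum_mul_sum_of_sq_eq_mul
      · intro ℓ _
        positivity
      · intro ℓ _
        positivity
      · intro ℓ hℓ
        rw [div_pow, Real.sq_sqrt (by positivity)]
        have hℓ1 : 1 ≤ ℓ := (Finset.mem_Icc.mp hℓ).1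
        have : ((ℓ:ℝ))^2 ≠ 0 := by
          have : (0:ℝ) < ℓ := by exact_mod_cast hℓ1
          positivity
        field_simp
    have h2 : ∑ ℓ ∈ Finset.Icc 1 w, sl ℓ * k ≤ h * k := by
      rw [← Finset.sum_mul]
      exact mul_le_mul_of_nonneg_right hsum_s hk0
    have h3 := sum_inv_sq_le w
    have h3' : 0 ≤ ∑ ℓ ∈ Finset.Icc 1 w, 1/(ℓ:ℝ)^2 :=
      Finset.sum_nonneg fun ℓ _ => by positivity
    have h4 : X^2 ≤ h * k * 2 := by
      calc X^2 ≤ (∑ ℓ ∈ Finset.Icc 1 w, sl ℓ * k) * (∑ ℓ ∈ Finset.Icc 1 w, 1/(ℓ:ℝ)^2) := h1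
      _ ≤ (h*k) * 2 := by
          apply mul_le_mul h2 h3 h3'
          positivity
    set t := Real.sqrt γ with ht
    have htpos : 0 < t := Real.sqrt_pos.mpr hγ
    have ht2 : t^2 = γ := Real.sq_sqrt hγ.le
    have hkh : (k:ℝ) * γ ≤ h := by linarith [mul_comm γ (k:ℝ)]
    have h5 : (X*t)^2 ≤ 2 * h^2 := by
      have : X^2 * γ ≤ h*k*2*γ := mul_le_mul_of_nonneg_right h4 hγ.le
      calc (X*t)^2 = X^2 * t^2 := by ring
      _ = X^2 * γ := by rw [ht2]
      _ ≤ h*k*2*γ := this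
      _ = (k*γ) * (2*h) := by ring
      _ ≤ h * (2*h) := by
          apply mul_le_mul_of_nonneg_right hkh
          linarith
      _ = 2 * h^2 := by ring
    have h6 : X * t ≤ 3/2 * h := by
      nlinarith [mul_nonneg hXnn htpos.le]
    rw [show 3/2 * (h:ℝ) / Real.sqrt γ = 3/2 * (h:ℝ) / t by rw [ht]]
    rw [le_div_iff₀ htpos]
    linarith
  -- final assembly
  calc ∑ ℓ ∈ Finset.Icc 1 w, ∑ p ∈ u.filter (fun p => spanN p = ℓ), F p
      ≤ ∑ ℓ ∈ Finset.Icc 1 w, (2 * sl ℓ + 2 * (Real.sqrt (sl ℓ * k) / ℓ)) :=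
        Finset.sum_le_sum hfiber
  _ = 2 * (∑ ℓ ∈ Finset.Icc 1 w, sl ℓ) + 2 * ∑ ℓ ∈ Finset.Icc 1 w, Real.sqrt (sl ℓ * k) / ℓ := by
        rw [Finset.sum_add_distrib, ← Finset.mul_sum, ← Finset.mul_sum]
  _ ≤ 2 * h + 2 * (3/2 * h / Real.sqrt γ) := by
        have := mul_le_mul_of_nonneg_left hsum_s (by norm_num : (0:ℝ) ≤ 2)
        have := mul_le_mul_of_nonneg_left hCS (by norm_num : (0:ℝ) ≤ 2)
        linarith
  _ = (2 + 3/Real.sqrt γ) * h := by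
        field_simp

lemma upper_bound {w : ℕ} (k h : ℕ) (hk : 1 ≤ k) (γ : ℝ) (hγ : 0 < γ) (hγk : γ * k ≤ h)
    {c : Fin w → Fin w → ℕ} (hc : IsKostant (fun _ : Fin w => h) c) :
    Real.log (Fcol k c) ≤ (3 + 3/Real.sqrt γ) * ((h:ℝ) * w) := by
  classical
  -- log of the product is a double sum of logs
  have hpos : ∀ i j : Fin w, 0 < (if i ≤ j then (c i j + k - 1).choose (k-1) else 1) := by
    intro i j
    split_ifs with hij
    · exact Nat.choose_pos (by omega)
    · exact one_pos
  have e0 : ((Fcol k c : ℕ) : ℝ)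
      = ∏ i : Fin w, ∏ j : Fin w, ((if i ≤ j then (c i j + k - 1).choose (k-1) else 1 : ℕ) : ℝ) := by
    unfold Fcol
    push_cast
    rfl
  have e1 : Real.log (Fcol k c)
      = ∑ i : Fin w, ∑ j : Fin w,
          Real.log ((if i ≤ j then (c i j + k - 1).choose (k-1) else 1 : ℕ) : ℝ) := by
    rw [e0, Real.log_prod]
    · refine Finset.sum_congr rfl (fun i _ => ?_)
      rw [Real.log_prod]
      intro j _
      exact_mod_cast (hpos i j).ne'
    · intro i _
      refine ne_of_gt (Finset.prod_pos fun j _ => ?_)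
      exact_mod_cast hpos i j
  rw [e1]
  -- termwise bound
  have hterm : ∀ i j : Fin w,
      Real.log ((if i ≤ j then (c i j + k - 1).choose (k-1) else 1 : ℕ) : ℝ)
      ≤ (if i ≤ j then (c i j : ℝ) else 0)
        + (if i ≤ j then (c i j : ℝ) * Real.log (((c i j:ℝ) + k)/(c i j)) else 0) := by
    intro i j
    split_ifs with hij
    · exact log_choose_le (c i j) k hk
    · simp
  have step1 : ∑ i : Fin w, ∑ j : Fin w,
      Real.log ((if i ≤ j then (c i j + k - 1).choose (k-1) else 1 : ℕ) : ℝ)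
      ≤ (∑ i : Fin w, ∑ j : Fin w, (if i ≤ j then (c i j : ℝ) else 0))
        + ∑ i : Fin w, ∑ j : Fin w,
            (if i ≤ j then (c i j : ℝ) * Real.log (((c i j:ℝ) + k)/(c i j)) else 0) := by
    rw [← Finset.sum_add_distrib]
    refine Finset.sum_le_sum (fun i _ => ?_)
    rw [← Finset.sum_add_distrib]
    exact Finset.sum_le_sum (fun j _ => hterm i j)
  refine step1.trans ?_
  -- the mass part
  have hrow : ∀ i : Fin w, (∑ j : Fin w, if i ≤ j then c i j else 0) ≤ h := by
    intro i
    have h2 := hc.2 i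
    calc (∑ j : Fin w, if i ≤ j then c i j else 0)
        = ∑ j : Fin w, (if i ≤ i ∧ i ≤ j then c i j else 0) := by simp
    _ ≤ ∑ i' : Fin w, ∑ j : Fin w, (if i' ≤ i ∧ i ≤ j then c i' j else 0) :=
        Finset.single_le_sum (f := fun i' => ∑ j : Fin w, (if i' ≤ i ∧ i ≤ j then c i' j else 0))
          (fun _ _ => Nat.zero_le _) (Finset.mem_univ i)
    _ = h := h2
  have hmass : (∑ i : Fin w, ∑ j : Fin w, (if i ≤ j then (c i j : ℝ) else 0)) ≤ (h:ℝ) * w := by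
    have e2 : ∀ i : Fin w, ∑ j : Fin w, (if i ≤ j then (c i j : ℝ) else 0) ≤ (h:ℝ) := by
      intro i
      have := hrow i
      calc ∑ j : Fin w, (if i ≤ j then (c i j : ℝ) else 0)
          = (((∑ j : Fin w, if i ≤ j then c i j else 0 : ℕ)) : ℝ) := by push_cast; rfl
      _ ≤ (h:ℝ) := by exact_mod_cast this
    calc ∑ i : Fin w, ∑ j : Fin w, (if i ≤ j then (c i j : ℝ) else 0)
        ≤ ∑ _i : Fin w, (h:ℝ) := Finset.sum_le_sum (fun i _ => e2 i)
    _ = (h:ℝ) * w := by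
        rw [Finset.sum_const, Finset.card_univ, Fintype.card_fin, nsmul_eq_mul]
        ring
  -- the log part, via the per-point bound
  have hXnn : ∀ i j : Fin w, 0 ≤ (c i j : ℝ) * Real.log (((c i j:ℝ) + k)/(c i j)) := by
    intro i j
    rcases Nat.eq_zero_or_pos (c i j) with h0|h0
    · simp [h0]
    · have hcR : (1:ℝ) ≤ (c i j : ℝ) := by exact_mod_cast h0
      have : (1:ℝ) ≤ ((c i j:ℝ) + k)/(c i j) := by
        rw [le_div_iff₀ (by linarith)]
        have : (0:ℝ) ≤ (k:ℝ) := Nat.cast_nonneg k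
        linarith
      have := Real.log_nonneg this
      positivity
  have hlogpart : ∑ i : Fin w, ∑ j : Fin w,
      (if i ≤ j then (c i j : ℝ) * Real.log (((c i j:ℝ) + k)/(c i j)) else 0)
      ≤ ((2 + 3/Real.sqrt γ) * h) * w := by
    have hpair : ∀ i j : Fin w,
        (if i ≤ j then (c i j : ℝ) * Real.log (((c i j:ℝ) + k)/(c i j)) else 0)
        ≤ ∑ m : Fin w, (if i ≤ m ∧ m ≤ j then
            (c i j : ℝ) * Real.log (((c i j : ℝ) + k)/(c i j)) / ((j.1 - i.1 + 1 : ℕ) : ℝ) else 0) := by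
      intro i j
      split_ifs with hij
      · have efilter : Finset.univ.filter (fun m : Fin w => i ≤ m ∧ m ≤ j) = Finset.Icc i j := by
          ext m
          simp [Finset.mem_Icc]
        have ecard : (Finset.Icc i j).card = j.1 - i.1 + 1 := by
          rw [Fin.card_Icc]
          have : i.1 ≤ j.1 := hij
          omega
        rw [← Finset.sum_filter, efilter, Finset.sum_const, ecard, nsmul_eq_mul]
        have hℓne : ((j.1 - i.1 + 1 : ℕ) : ℝ) ≠ 0 := by
          have : 0 < j.1 - i.1 + 1 := by omega
          exact_mod_cast this.ne'
        field_simp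
        exact le_refl _
      · refine Finset.sum_nonneg (fun m _ => ?_)
        split_ifs with hm
        · have hden : (0:ℝ) ≤ ((j.1 - i.1 + 1 : ℕ) : ℝ) := Nat.cast_nonneg _
          exact div_nonneg (hXnn i j) hden
        · exact le_refl 0
    calc ∑ i : Fin w, ∑ j : Fin w,
        (if i ≤ j then (c i j : ℝ) * Real.log (((c i j:ℝ) + k)/(c i j)) else 0)
        ≤ ∑ i : Fin w, ∑ j : Fin w, ∑ m : Fin w, (if i ≤ m ∧ m ≤ j then
            (c i j : ℝ) * Real.log (((c i j : ℝ) + k)/(c i j)) / ((j.1 - i.1 + 1 : ℕ) : ℝ) else 0) := by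
          refine Finset.sum_le_sum (fun i _ => ?_)
          exact Finset.sum_le_sum (fun j _ => hpair i j)
    _ = ∑ m : Fin w, ∑ i : Fin w, ∑ j : Fin w, (if i ≤ m ∧ m ≤ j then
            (c i j : ℝ) * Real.log (((c i j : ℝ) + k)/(c i j)) / ((j.1 - i.1 + 1 : ℕ) : ℝ) else 0) := by
          exact (Finset.sum_congr rfl (fun i _ => Finset.sum_comm)).trans Finset.sum_comm
    _ ≤ ∑ _m : Fin w, (2 + 3/Real.sqrt γ) * h := by
          refine Finset.sum_le_sum (fun m _ => ?_)
          exact perpoint k h hk γ hγ hγk c m (hc.2 m)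
    _ = ((2 + 3/Real.sqrt γ) * h) * w := by
          rw [Finset.sum_const, Finset.card_univ, Fintype.card_fin, nsmul_eq_mul]
          ring
  have hsqrt : 0 < Real.sqrt γ := Real.sqrt_pos.mpr hγ
  have hwnn : (0:ℝ) ≤ (w:ℝ) := Nat.cast_nonneg w
  calc (∑ i : Fin w, ∑ j : Fin w, (if i ≤ j then (c i j : ℝ) else 0))
        + ∑ i : Fin w, ∑ j : Fin w,
            (if i ≤ j then (c i j : ℝ) * Real.log (((c i j:ℝ) + k)/(c i j)) else 0)
      ≤ (h:ℝ)*w + ((2 + 3/Real.sqrt γ) * h) * w := by linarith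
  _ = (3 + 3/Real.sqrt γ) * ((h:ℝ) * w) := by ring

/-- If `k ≻ 1` and `h ≍ k`, then `L^k[h,w] ≍ h·w`. -/
theorem Lcol_asymp_equiv (h w k : ℕ → ℕ)
    (hh : ∀ n, 0 < h n) (hw : ∀ n, 0 < w n) (hk : ∀ n, 0 < k n)
    (hk1 : Tendsto (fun n => (1 : ℝ) / k n) atTop (nhds 0))
    (hhk : ∃ c d : ℝ, 0 < c ∧ c ≤ d ∧ ∀ᶠ n : ℕ in atTop,
      c * (k n : ℝ) ≤ (h n : ℝ) ∧ (h n : ℝ) ≤ d * (k n : ℝ)) :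
    ∃ a b : ℝ, 0 < a ∧ a ≤ b ∧ ∀ᶠ n : ℕ in atTop,
      a * ((h n : ℝ) * (w n : ℝ)) ≤ Lcol (k n) (h n) (w n) ∧
      Lcol (k n) (h n) (w n) ≤ b * ((h n : ℝ) * (w n : ℝ)) := by
  obtain ⟨γ, d, hγ, hγd, hev⟩ := hhk
  set D : ℝ := max d 1 with hD
  have hD1 : (1:ℝ) ≤ D := le_max_right _ _
  have hDpos : (0:ℝ) < D := by linarith
  have hsqrtγ : 0 < Real.sqrt γ := Real.sqrt_pos.mpr hγ
  have hb : (0:ℝ) < 3 + 3/Real.sqrt γ := by positivity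
  refine ⟨min (Real.log 2/(2*D)) (3 + 3/Real.sqrt γ), 3 + 3/Real.sqrt γ, ?_,
    min_le_right _ _, ?_⟩
  · apply lt_min
    · apply div_pos (Real.log_pos one_lt_two)
      linarith
    · exact hb
  · have hk2 : ∀ᶠ n in atTop, 2 ≤ k n := by
      have hev2 := hk1.eventually (gt_mem_nhds (show (0:ℝ) < 1/2 by norm_num))
      filter_upwards [hev2] with n hn
      by_contra hlt
      push_neg at hlt
      have hk1n : k n = 1 := by have := hk n; omega
      rw [hk1n] at hn
      norm_num at hn
    filter_upwards [hev, hk2] with n hn hk2n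
    obtain ⟨hckh, hhdk⟩ := hn
    have hKpos : 1 ≤ k n := by omega
    have hHnn : (0:ℝ) ≤ (h n : ℝ) := Nat.cast_nonneg _
    have hWnn : (0:ℝ) ≤ (w n : ℝ) := Nat.cast_nonneg _
    have hKR : (2:ℝ) ≤ (k n : ℝ) := by exact_mod_cast hk2n
    constructor
    · -- lower bound
      have hT := two_pow_le_Tcol (w := w n) (k n) (h n) hKpos
      have hTR : ((2 ^ (min (h n) (k n - 1) * w n) : ℕ) : ℝ) ≤ (Tcol (k n) (fun _ : Fin (w n) => h n) : ℝ) := by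
        exact_mod_cast hT
      have h2pos : (0:ℝ) < ((2 ^ (min (h n) (k n - 1) * w n) : ℕ) : ℝ) := by
        positivity
      have hlog : Real.log ((2 ^ (min (h n) (k n - 1) * w n) : ℕ) : ℝ)
          ≤ Lcol (k n) (h n) (w n) := by
        unfold Lcol
        exact Real.log_le_log h2pos hTR
      have hlogeq : Real.log ((2 ^ (min (h n) (k n - 1) * w n) : ℕ) : ℝ)
          = ((min (h n) (k n - 1) * w n : ℕ) : ℝ) * Real.log 2 := by
        push_cast
        rw [Real.log_pow]
        push_cast
        ring
      have hmin : (h n : ℝ)/(2*D) ≤ ((min (h n) (k n - 1) : ℕ) : ℝ) := by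
        have hcast : ((min (h n) (k n - 1) : ℕ) : ℝ) = min ((h n : ℝ)) (((k n : ℝ) - 1)) := by
          rw [Nat.cast_min]
          congr 1
          rw [Nat.cast_sub hKpos]
          norm_num
        rw [hcast]
        apply le_min
        · apply div_le_self hHnn
          linarith
        · have h1 : (h n : ℝ) ≤ D * (k n : ℝ) := by
            calc (h n : ℝ) ≤ d * (k n : ℝ) := hhdk
            _ ≤ D * (k n : ℝ) := by
                apply mul_le_mul_of_nonneg_right (le_max_left _ _)
                linarith
          have h2 : (h n : ℝ)/(2*D) ≤ (k n : ℝ)/2 := by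
            rw [div_le_div_iff₀ (by linarith) (by norm_num)]
            nlinarith
          linarith
      have hfin : min (Real.log 2/(2*D)) (3 + 3/Real.sqrt γ) * ((h n : ℝ) * (w n : ℝ))
          ≤ ((min (h n) (k n - 1) * w n : ℕ) : ℝ) * Real.log 2 := by
        have hlog2 : (0:ℝ) ≤ Real.log 2 := Real.log_nonneg (by norm_num)
        calc min (Real.log 2/(2*D)) (3 + 3/Real.sqrt γ) * ((h n : ℝ) * (w n : ℝ))
            ≤ (Real.log 2/(2*D)) * ((h n : ℝ) * (w n : ℝ)) := by
              apply mul_le_mul_of_nonneg_right (min_le_left _ _)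
              positivity
        _ = ((h n : ℝ)/(2*D)) * (w n : ℝ) * Real.log 2 := by ring
        _ ≤ ((min (h n) (k n - 1) : ℕ) : ℝ) * (w n : ℝ) * Real.log 2 := by
              apply mul_le_mul_of_nonneg_right _ hlog2
              exact mul_le_mul_of_nonneg_right hmin hWnn
        _ = ((min (h n) (k n - 1) * w n : ℕ) : ℝ) * Real.log 2 := by
              push_cast
              ring
      calc min (Real.log 2/(2*D)) (3 + 3/Real.sqrt γ) * ((h n : ℝ) * (w n : ℝ))
          ≤ ((min (h n) (k n - 1) * w n : ℕ) : ℝ) * Real.log 2 := hfin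
      _ = Real.log ((2 ^ (min (h n) (k n - 1) * w n) : ℕ) : ℝ) := hlogeq.symm
      _ ≤ Lcol (k n) (h n) (w n) := hlog
    · -- upper bound
      obtain ⟨cstar, hcstar, heq⟩ := exists_max_kostant (w := w n) (k n) (h n)
      have : Lcol (k n) (h n) (w n) = Real.log (Fcol (k n) cstar) := by
        unfold Lcol
        rw [heq]
      rw [this]
      exact upper_bound (k n) (h n) hKpos γ hγ hckh hcstar
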